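/- Let u_{α,β}(x) = ∫₀^∞ e^{-αt} E_x[e^{-β∫₀^t 1_{[0,∞)}(b(s))ds}] dt for standard 1-D Brownian motion b; then u_{α,β} solves (1/2)u'' - (α+β)u = -1 on (0,∞) and (1/2)u'' - αu = -1 on (-∞,0), and the bounded continuous solution with continuous derivative at 0 satisfies u_{α,β}(0) = 1/√(α(α+β)). -/

import Mathlib

open Real Set

open Filter Topology



lemma monoOn_of_hasDerivAt {f f' : ℝ → ℝ} {D : Set ℝ} (hD : Convex ℝ D)
    (hfc : ContinuousOn f D)
    (hf : ∀ x ∈ interior D, HasDerivAt f (f' x) x)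
    (h0 : ∀ x ∈ interior D, 0 ≤ f' x) : MonotoneOn f D := by
  apply monotoneOn_of_deriv_nonneg hD hfc
  · intro x hx; exact (hf x hx).differentiableAt.differentiableWithinAt
  · intro x hx; rw [(hf x hx).deriv]; exact h0 x hx

lemma antiOn_of_hasDerivAt {f f' : ℝ → ℝ} {D : Set ℝ} (hD : Convex ℝ D)
    (hfc : ContinuousOn f D)
    (hf : ∀ x ∈ interior D, HasDerivAt f (f' x) x)
    (h0 : ∀ x ∈ interior D, f' x ≤ 0) : AntitoneOn f D := by
  apply antitoneOn_of_deriv_nonpos hD hfc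
  · intro x hx; exact (hf x hx).differentiableAt.differentiableWithinAt
  · intro x hx; rw [(hf x hx).deriv]; exact h0 x hx

lemma constOn_of_hasDerivAt_zero {f : ℝ → ℝ} {a b : ℝ}
    (hf : ∀ x ∈ Ioo a b, HasDerivAt f 0 x) :
    ∀ x ∈ Ioo a b, ∀ y ∈ Ioo a b, f x = f y := by
  have hc : ContinuousOn f (Ioo a b) := fun x hx => (hf x hx).continuousAt.continuousWithinAt
  have hint : interior (Ioo a b) = Ioo a b := interior_Ioo
  have h1 : MonotoneOn f (Ioo a b) :=
    monoOn_of_hasDerivAt (convex_Ioo a b) hc (fun x hx => hf x (hint ▸ hx))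
      (fun x hx => le_refl 0)
  have h2 : AntitoneOn f (Ioo a b) :=
    antiOn_of_hasDerivAt (convex_Ioo a b) hc (fun x hx => hf x (hint ▸ hx))
      (fun x hx => le_refl 0)
  intro x hx y hy
  rcases le_total x y with h | h
  · exact le_antisymm (h1 hx hy h) (h2 hx hy h)
  · exact le_antisymm (h2 hy hx h) (h1 hy hx h)

lemma grow_of_hasDerivAt {f f' : ℝ → ℝ} {a p : ℝ}
    (hfc : ContinuousOn f (Ici a))
    (hf : ∀ x ∈ Ioi a, HasDerivAt f (f' x) x)
    (hp : ∀ x ∈ Ioi a, p ≤ f' x) : ∀ x ∈ Ici a, f a + p * (x - a) ≤ f x := by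
  have hm : MonotoneOn (fun x => f x - p * x) (Ici a) := by
    refine monoOn_of_hasDerivAt (f' := fun x => f' x - p) (convex_Ici a)
      (hfc.sub (continuous_const.mul continuous_id).continuousOn) ?_ ?_
    · rw [interior_Ici]; intro x hx
      exact ((hf x hx).sub ((hasDerivAt_id x).const_mul p)).congr_deriv (by simp)
    · rw [interior_Ici]; intro x hx
      have := hp x hx
      show 0 ≤ f' x - p
      linarith
  intro x hx
  have h2 := hm self_mem_Ici hx hx
  simp only at h2
  linarith


lemma endgame {d g0 γ : ℝ} (hγpos : 0 < γ)
    (hfact : (g0 - γ*d)*(g0 + γ*d) = 0) (hJ : 2*d*g0 + 2*γ*d^2 ≤ 0) :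
    g0 = -γ*d := by
  rcases mul_eq_zero.1 hfact with h | h
  · have hd : g0 = γ*d := by linarith
    rw [hd] at hJ
    have h4 : γ * d^2 ≤ 0 := by nlinarith
    have hd3 : d = 0 := by
      by_contra h5
      have h6 : 0 < d^2 := by positivity
      nlinarith [mul_pos hγpos h6]
    rw [hd, hd3]; ring
  · linarith

lemma side (μ : ℝ) (hμ : 0 < μ) (u : ℝ → ℝ) (hdiff : Differentiable ℝ u)
    (hc : Continuous (deriv u)) (C : ℝ) (hbdd : ∀ x, |u x| ≤ C)
    (hODE : ∀ x ∈ Ioi (0:ℝ), deriv (deriv u) x = 2*μ*u x - 2) :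
    deriv u 0 = -Real.sqrt (2*μ) * (u 0 - 1/μ) := by
  set g := deriv u with hgdef
  set c : ℝ := 1/μ with hcdef
  have hμc : 2*μ*c = 2 := by rw [hcdef]; field_simp
  set q : ℝ → ℝ := fun x => (u x - c)^2 with hqdef
  set Q1 : ℝ → ℝ := fun x => 2*(u x - c)*(g x) with hQ1def
  have hcu : Continuous u := hdiff.continuous
  have hQ1cont : Continuous Q1 := by
    rw [hQ1def]; fun_prop
  have hqcont : Continuous q := by rw [hqdef]; fun_prop
  have hqd : ∀ x, HasDerivAt q (Q1 x) x := by
    intro x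
    have h := (((hdiff x).hasDerivAt.sub_const c).pow 2)
    rw [hqdef, hQ1def]
    refine h.congr_deriv ?_
    simp [pow_one, hgdef]
  have hbad : ∀ x ∈ Ioi (0:ℝ), ¬ DifferentiableAt ℝ g x → u x = c := by
    intro x hx hnd
    have h0 : deriv g x = 0 := deriv_zero_of_not_differentiableAt hnd
    have h1 := hODE x hx
    rw [h0] at h1
    rw [hcdef]
    field_simp
    linarith
  have hgood : ∀ x ∈ Ioi (0:ℝ), u x ≠ c → HasDerivAt g (2*μ*(u x - c)) x := by
    intro x hx hne
    have hd : DifferentiableAt ℝ g x := by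
      by_contra hnd; exact hne (hbad x hx hnd)
    have := hd.hasDerivAt
    rw [hODE x hx] at this
    refine this.congr_deriv ?_
    have : (2:ℝ)*μ*(u x - c) = 2*μ*u x - 2*μ*c := by ring
    rw [this, hμc]
  have hQ1d : ∀ x ∈ Ioi (0:ℝ), HasDerivAt Q1 (2*(g x)^2 + 4*μ*(q x)) x := by
    intro x hx
    by_cases hne : u x = c
    · -- junk case: u x = c, use slope argument
      have hQ1x : Q1 x = 0 := by rw [hQ1def]; simp [hne]
      have hslope : Tendsto (slope Q1 x) (𝓝[≠] x) (𝓝 (2*(g x)^2)) := by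
        have husl : Tendsto (slope u x) (𝓝[≠] x) (𝓝 (g x)) :=
          hasDerivAt_iff_tendsto_slope.1 (hdiff x).hasDerivAt
        have hgx : Tendsto (fun y => 2 * g y) (𝓝[≠] x) (𝓝 (2 * g x)) :=
          ((hc.tendsto x).const_mul 2).mono_left nhdsWithin_le_nhds
        have hmul := hgx.mul husl
        have heq : ∀ y ∈ ({x}ᶜ : Set ℝ), (fun y => 2 * g y * slope u x y) y = slope Q1 x y := by
          intro y hy
          have hyx : y - x ≠ 0 := sub_ne_zero.mpr hy
          simp only [slope_def_field, hQ1x, hQ1def, hne]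
          field_simp
          ring
        have := hmul.congr' (by
          filter_upwards [self_mem_nhdsWithin] with y hy
          exact heq y hy)
        convert this using 2
        ring
      have h2 : HasDerivAt Q1 (2*(g x)^2) x := hasDerivAt_iff_tendsto_slope.2 hslope
      have hq0 : q x = 0 := by rw [hqdef]; simp [hne]
      rw [hq0]
      simpa using h2
    · have hg := hgood x hx hne
      have h1 := (((hdiff x).hasDerivAt.sub_const c).const_mul 2).mul hg
      rw [hQ1def, hqdef]
      refine h1.congr_deriv ?_
      beta_reduce
      ring
  have hCc : ∀ x, q x ≤ (C + |c|)^2 := by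
    intro x
    have h1 : |u x - c| ≤ C + |c| := by
      calc |u x - c| ≤ |u x| + |c| := abs_sub (u x) c
        _ ≤ C + |c| := by have := hbdd x; linarith
    have h2 : q x = |u x - c|^2 := by rw [hqdef]; simp [sq_abs]
    rw [h2]
    exact pow_le_pow_left₀ (abs_nonneg _) h1 2
  have hq0' : ∀ x, 0 ≤ q x := fun x => sq_nonneg _
  have hQ1mono : MonotoneOn Q1 (Ici (0:ℝ)) := by
    refine monoOn_of_hasDerivAt (f' := fun x => 2*(g x)^2 + 4*μ*(q x)) (convex_Ici 0)
      hQ1cont.continuousOn ?_ ?_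
    · rw [interior_Ici]; exact fun x hx => hQ1d x hx
    · rw [interior_Ici]; intro x hx
      have := hq0' x
      show (0:ℝ) ≤ 2*(g x)^2 + 4*μ*(q x)
      nlinarith [sq_nonneg (g x)]
  have hQ1nonpos : ∀ x ∈ Ici (0:ℝ), Q1 x ≤ 0 := by
    by_contra h; push_neg at h; obtain ⟨x₁, hx₁, hp⟩ := h
    have hgrow := grow_of_hasDerivAt (f := q) (f' := Q1) (a := x₁) (p := Q1 x₁)
      hqcont.continuousOn (fun x _ => hqd x)
      (fun x hx => hQ1mono hx₁ (mem_Ici.mpr (le_trans (mem_Ici.mp hx₁) (mem_Ioi.mp hx).le)) (mem_Ioi.mp hx).le)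
    set T := x₁ + ((C + |c|)^2 + 1)/(Q1 x₁) with hT
    have hT1 : x₁ ≤ T := by
      rw [hT]
      have : 0 ≤ ((C + |c|)^2 + 1)/(Q1 x₁) := by positivity
      linarith
    have h3 := hgrow T hT1
    have h4 : Q1 x₁ * (T - x₁) = (C + |c|)^2 + 1 := by
      rw [hT]; field_simp
      try ring
    have := hCc T
    have := hq0' x₁
    linarith
  have hq_anti : AntitoneOn q (Ici (0:ℝ)) := by
    refine antiOn_of_hasDerivAt (f' := Q1) (convex_Ici 0) hqcont.continuousOn ?_ ?_
    · rw [interior_Ici]; exact fun x _ => hqd x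
    · rw [interior_Ici]; exact fun x hx => hQ1nonpos x (mem_Ici.mpr (mem_Ioi.mp hx).le)
  have hqsmall : ∀ ε > 0, ∃ X, 0 ≤ X ∧ ∀ x, X ≤ x → q x ≤ ε := by
    intro ε hε
    have hone : ∃ x₂, 1 ≤ x₂ ∧ q x₂ ≤ ε := by
      by_contra h; push_neg at h
      have hgrow := grow_of_hasDerivAt (f := Q1) (f' := fun x => 2*(g x)^2 + 4*μ*(q x))
        (a := 1) (p := 4*μ*ε) hQ1cont.continuousOn
        (fun x hx => hQ1d x (mem_Ioi.mpr (lt_trans one_pos (mem_Ioi.mp hx))))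
        (fun x hx => by have := (h x hx.le).le; show 4*μ*ε ≤ 2*(g x)^2 + 4*μ*(q x); nlinarith [sq_nonneg (g x)])
      set T := 1 + (1 + |Q1 1|)/(4*μ*ε) with hT
      have hT1 : (1:ℝ) ≤ T := by
        rw [hT]
        have : 0 ≤ (1 + |Q1 1|)/(4*μ*ε) := by positivity
        linarith
      have h3 := hgrow T hT1
      have h4 : 4*μ*ε * (T - 1) = 1 + |Q1 1| := by
        rw [hT]; field_simp; ring
      try ring
      have h5 := hQ1nonpos T (le_trans zero_le_one hT1)
      have h6 := abs_nonneg (Q1 1)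
      have h7 := neg_abs_le (Q1 1)
      linarith
    obtain ⟨x₂, hx₂, hq₂⟩ := hone
    refine ⟨x₂, le_trans zero_le_one hx₂, fun x hx => ?_⟩
    exact le_trans (hq_anti (le_trans zero_le_one hx₂) (le_trans (le_trans zero_le_one hx₂) hx) hx) hq₂
  -- gamma
  set γ := Real.sqrt (2*μ) with hγdef
  have hγ2 : γ^2 = 2*μ := Real.sq_sqrt (by positivity)
  have hγpos : 0 < γ := Real.sqrt_pos.mpr (by positivity)
  have hJmono : MonotoneOn (fun x => Q1 x + 2*γ*q x) (Ici (0:ℝ)) := by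
    refine monoOn_of_hasDerivAt (f' := fun x => (2*(g x)^2 + 4*μ*(q x)) + 2*γ*Q1 x)
      (convex_Ici 0) (by fun_prop) ?_ ?_
    · rw [interior_Ici]; intro x hx
      exact (hQ1d x hx).add ((hqd x).const_mul (2*γ))
    · rw [interior_Ici]; intro x _
      have hqx : q x = (u x - c)^2 := rfl
      have hQ1x : Q1 x = 2*(u x - c)*(g x) := rfl
      show (0:ℝ) ≤ 2*(g x)^2 + 4*μ*(q x) + 2*γ*Q1 x
      nlinarith [sq_nonneg (g x + γ*(u x - c)), hγ2]
  have hJ0 : Q1 0 + 2*γ*q 0 ≤ 0 := by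
    by_contra hpos; push_neg at hpos
    obtain ⟨X, hX0, hXs⟩ := hqsmall ((Q1 0 + 2*γ*q 0)/(4*γ)) (by positivity)
    have h1 := hJmono (le_refl (0:ℝ) : (0:ℝ) ∈ Ici (0:ℝ)) (mem_Ici.mpr hX0) hX0
    have h2 := hXs X le_rfl
    have h3 := hQ1nonpos X hX0
    have h4 : 2*γ*q X ≤ 2*γ*((Q1 0 + 2*γ*q 0)/(4*γ)) :=
      mul_le_mul_of_nonneg_left h2 (by positivity)
    have h5 : 2*γ*((Q1 0 + 2*γ*q 0)/(4*γ)) = (Q1 0 + 2*γ*q 0)/2 := by field_simp; ring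
    simp only at h1
    linarith
  -- Energy function
  set E : ℝ → ℝ := fun x => (g x)^2 - 2*μ*(q x) with hEdef
  have hEcont : Continuous E := by rw [hEdef]; fun_prop
  have hE0deriv : ∀ x ∈ Ioi (0:ℝ), u x ≠ c → HasDerivAt E 0 x := by
    intro x hx hne
    have hg := hgood x hx hne
    have h2 := (hg.pow 2).sub ((hqd x).const_mul (2*μ))
    rw [hEdef]
    refine h2.congr_deriv ?_
    have hQ1x : Q1 x = 2*(u x - c)*(g x) := rfl
    rw [hQ1x]; simp [pow_one]; ring
  have hEgood : ∀ x ∈ Ioi (0:ℝ), E x ≠ 0 → HasDerivAt E 0 x := by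
    intro x hx hEne
    by_cases hne : u x = c
    · have hq0x : q x = 0 := by rw [hqdef]; simp [hne]
      have hgx : g x ≠ 0 := by
        intro h0
        apply hEne
        show (g x)^2 - 2*μ*(q x) = 0
        rw [h0, hq0x]; ring
      obtain ⟨ε, hε, hball⟩ := Metric.continuousAt_iff.1 hc.continuousAt (|g x|) (abs_pos.mpr hgx)
      set r := min ε x with hrdef
      have hrx : r ≤ x := min_le_right ε x
      have hrε : r ≤ ε := min_le_left ε x
      have hr : 0 < r := lt_min hε hx
      have hsub : ∀ y ∈ Ioo (x - r) (x + r), 0 < y ∧ (0 < g x → 0 < g y) ∧ (g x < 0 → g y < 0) := by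
        intro y hy
        have hy1 := hy.1; have hy2 := hy.2
        have hdist : dist y x < ε := by
          rw [Real.dist_eq, abs_lt]; constructor <;> linarith
        have hb := hball hdist
        rw [Real.dist_eq, abs_lt] at hb
        rcases abs_cases (g x) with ⟨ha, _⟩ | ⟨ha, _⟩ <;>
          exact ⟨by linarith, fun h => by linarith, fun h => by linarith⟩
      have huy : ∀ y ∈ Ioo (x - r) (x + r), y ≠ x → u y ≠ c := by
        have hxmem : x ∈ Ioo (x - r) (x + r) := ⟨by linarith, by linarith⟩
        rcases lt_or_gt_of_ne hgx with hgneg | hgpos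
        · have hmono : StrictAntiOn u (Ioo (x - r) (x + r)) := by
            apply strictAntiOn_of_deriv_neg (convex_Ioo _ _) hcu.continuousOn
            rw [interior_Ioo]; intro y hy
            exact (hsub y hy).2.2 hgneg
          intro y hy hyx
          rcases lt_or_gt_of_ne hyx with h | h
          · have := hmono hy hxmem h; rw [hne] at this; linarith
          · have := hmono hxmem hy h; rw [hne] at this; linarith
        · have hmono : StrictMonoOn u (Ioo (x - r) (x + r)) := by
            apply strictMonoOn_of_deriv_pos (convex_Ioo _ _) hcu.continuousOn
            rw [interior_Ioo]; intro y hy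
            exact (hsub y hy).2.1 hgpos
          intro y hy hyx
          rcases lt_or_gt_of_ne hyx with h | h
          · have := hmono hy hxmem h; rw [hne] at this; linarith
          · have := hmono hxmem hy h; rw [hne] at this; linarith
      have hEl : ∀ y ∈ Ioo (x - r) x, E y = E x := by
        intro y hy
        have hconst := constOn_of_hasDerivAt_zero (f := E) (a := x - r) (b := x)
          (fun z hz => hE0deriv z
            ((hsub z ⟨hz.1, by linarith [hz.2]⟩).1)
            (huy z ⟨hz.1, by linarith [hz.2]⟩ (ne_of_lt hz.2)))
        have heq : Set.EqOn E (fun _ => E y) (Ioo (x - r) x) := fun z hz => hconst z hz y hy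
        have hcl := heq.closure hEcont continuous_const
        have hxcl : x ∈ closure (Ioo (x - r) x) := by
          rw [closure_Ioo (by linarith : x - r ≠ x)]; exact ⟨by linarith, le_rfl⟩
        exact (hcl hxcl).symm
      have hEr : ∀ y ∈ Ioo x (x + r), E y = E x := by
        intro y hy
        have hconst := constOn_of_hasDerivAt_zero (f := E) (a := x) (b := x + r)
          (fun z hz => hE0deriv z
            ((hsub z ⟨by linarith [hz.1], hz.2⟩).1)
            (huy z ⟨by linarith [hz.1], hz.2⟩ (ne_of_gt hz.1)))
        have heq : Set.EqOn E (fun _ => E y) (Ioo x (x + r)) := fun z hz => hconst z hz y hy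
        have hcl := heq.closure hEcont continuous_const
        have hxcl : x ∈ closure (Ioo x (x + r)) := by
          rw [closure_Ioo (by linarith : x ≠ x + r)]; exact ⟨le_rfl, by linarith⟩
        exact (hcl hxcl).symm
      have hev : E =ᶠ[𝓝 x] fun _ => E x := by
        filter_upwards [Ioo_mem_nhds (by linarith : x - r < x) (by linarith : x < x + r)] with y hy
        rcases lt_trichotomy y x with h | h | h
        · exact hEl y ⟨hy.1, h⟩
        · rw [h]
        · exact hEr y ⟨h, hy.2⟩
      exact (hasDerivAt_const x (E x)).congr_of_eventuallyEq hev
    · exact hE0deriv x hx hne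
  have hEzero : E 0 = 0 := by
    by_contra hE0ne
    have hkey : ∀ b, 0 ≤ b → E b = E 0 := by
      intro b hb
      rcases eq_or_lt_of_le hb with hb0 | hb
      · rw [← hb0]
      · set S := {x ∈ Icc (0:ℝ) b | ∀ y ∈ Icc 0 x, E y = E 0} with hSdef
        have h0S : (0:ℝ) ∈ S := by
          refine ⟨⟨le_rfl, hb.le⟩, fun y hy => ?_⟩
          have : y = 0 := le_antisymm hy.2 hy.1
          rw [this]
        have hSbdd : BddAbove S := ⟨b, fun x hx => hx.1.2⟩
        set s := sSup S with hsdef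
        have hs0 : 0 ≤ s := le_csSup hSbdd h0S
        have hsb : s ≤ b := csSup_le ⟨0, h0S⟩ (fun x hx => hx.1.2)
        have hsE : ∀ y ∈ Icc (0:ℝ) s, E y = E 0 := by
          intro y hy
          rcases eq_or_lt_of_le hy.2 with hys | hys
          · -- y = s
            rcases eq_or_lt_of_le hy.1 with hy0 | hy0
            · rw [← hy0]
            · -- 0 < y = s
              have hlt : ∀ z ∈ Ioo (0:ℝ) s, E z = E 0 := by
                intro z hz
                obtain ⟨x', hx'S, hx'⟩ := exists_lt_of_lt_csSup ⟨0, h0S⟩ (show z < sSup S from hz.2)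
                exact hx'S.2 z ⟨hz.1.le, hx'.le⟩
              have heq : Set.EqOn E (fun _ => E 0) (Ioo (0:ℝ) s) := fun z hz => hlt z hz
              have hcl := heq.closure hEcont continuous_const
              have : y ∈ closure (Ioo (0:ℝ) s) := by
                rw [closure_Ioo (ne_of_lt (show (0:ℝ) < s from hys ▸ hy0))]
                exact ⟨hy.1, hy.2⟩
              exact hcl this
          · obtain ⟨x', hx'S, hx'⟩ := exists_lt_of_lt_csSup ⟨0, h0S⟩ hys
            exact hx'S.2 y ⟨hy.1, hx'.le⟩
        rcases eq_or_lt_of_le hsb with hseq | hslt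
        · rw [← hseq]; exact hsE s ⟨hs0, le_rfl⟩
        · exfalso
          have hEs : E s = E 0 := hsE s ⟨hs0, le_rfl⟩
          have hEsne : E s ≠ 0 := by rw [hEs]; exact hE0ne
          obtain ⟨r, hr, hball⟩ := Metric.continuousAt_iff.1 hEcont.continuousAt (|E s|) (abs_pos.mpr hEsne)
          set t := min (s + r/2) b with htdef
          have hst : s < t := lt_min (by linarith) hslt
          have htb : t ≤ b := min_le_right _ _
          have htr : t - s < r := by
            have := min_le_left (s + r/2) b
            simp only [htdef]; linarith [min_le_left (s + r/2) b]
          have hEnear : ∀ y ∈ Icc s t, E y ≠ 0 := by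
            intro y hy h0
            have hdist : dist y s < r := by
              rw [Real.dist_eq, abs_lt]; constructor <;> [linarith [hy.1]; linarith [hy.2]]
            have := hball hdist
            rw [h0, Real.dist_eq, zero_sub, abs_neg] at this
            exact lt_irrefl _ this
          have hconst := constOn_of_hasDerivAt_zero (f := E) (a := s) (b := t)
            (fun z hz => hEgood z (lt_of_le_of_lt hs0 hz.1)
              (hEnear z ⟨hz.1.le, hz.2.le⟩))
          -- value on Ioo s t equals E s = E 0, and also E t = E 0
          have hmid : ∀ y ∈ Ioo s t, E y = E 0 := by
            intro y hy
            have heq : Set.EqOn E (fun _ => E y) (Ioo s t) := fun z hz => hconst z hz y hy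
            have hcl := heq.closure hEcont continuous_const
            have hscl : s ∈ closure (Ioo s t) := by
              rw [closure_Ioo (ne_of_lt hst)]; exact ⟨le_rfl, hst.le⟩
            have := hcl hscl
            rw [hEs] at this; exact this.symm
          have hEt : E t = E 0 := by
            have hmidpt : (s + t)/2 ∈ Ioo s t := ⟨by linarith, by linarith⟩
            have heq : Set.EqOn E (fun _ => E 0) (Ioo s t) := fun z hz => hmid z hz
            have hcl := heq.closure hEcont continuous_const
            have : t ∈ closure (Ioo s t) := by
              rw [closure_Ioo (ne_of_lt hst)]; exact ⟨hst.le, le_rfl⟩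
            exact hcl this
          have htS : t ∈ S := by
            refine ⟨⟨by linarith, htb⟩, fun y hy => ?_⟩
            rcases le_or_gt y s with h | h
            · exact hsE y ⟨hy.1, h⟩
            · rcases eq_or_lt_of_le hy.2 with hyt | hyt
              · rw [hyt]; exact hEt
              · exact hmid y ⟨h, hyt⟩
          have := le_csSup hSbdd htS
          rw [← hsdef] at this
          linarith
    rcases lt_or_gt_of_ne hE0ne with hneg | hpos
    · -- E 0 < 0 : q bounded below by positive constant, contradiction with hqsmall
      obtain ⟨X, hX0, hXs⟩ := hqsmall (-(E 0)/(4*μ)) (div_pos (by linarith) (by positivity))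
      have h1 : (g X)^2 - 2*μ*(q X) = E 0 := hkey X hX0
      have h2 := hXs X le_rfl
      have h2' : q X * (4*μ) ≤ -E 0 := (le_div_iff₀ (by positivity : (0:ℝ) < 4*μ)).1 h2
      linarith [sq_nonneg (g X)]
    · -- E 0 > 0 : |g| bounded below, u unbounded
      have hg2 : ∀ x, 0 ≤ x → E 0 ≤ (g x)^2 := by
        intro x hx
        have h1 : (g x)^2 - 2*μ*(q x) = E 0 := hkey x hx
        have := hq0' x
        nlinarith
      have hgne : ∀ x, 0 ≤ x → g x ≠ 0 := by
        intro x hx h0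
        have := hg2 x hx; rw [h0] at this; nlinarith
      have hsq : Real.sqrt (E 0) ^ 2 = E 0 := Real.sq_sqrt hpos.le
      have hsqpos : 0 < Real.sqrt (E 0) := Real.sqrt_pos.mpr hpos
      rcases lt_or_gt_of_ne (hgne 0 le_rfl) with hgneg | hgpos
      · have hsign : ∀ x, 0 ≤ x → g x < 0 := by
          intro x hx
          by_contra hge; push_neg at hge
          have hmem : (0:ℝ) ∈ Icc (g 0) (g x) := ⟨hgneg.le, hge⟩
          obtain ⟨z, hz, hz0⟩ := intermediate_value_Icc hx hc.continuousOn hmem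
          exact hgne z hz.1 hz0
        have hle : ∀ x, 0 ≤ x → g x ≤ -Real.sqrt (E 0) := by
          intro x hx
          have h2 := hg2 x hx
          nlinarith [hsign x hx]
        have hgrow := grow_of_hasDerivAt (f := fun x => -u x) (f' := fun x => -g x)
          (a := 0) (p := Real.sqrt (E 0)) (hcu.neg.continuousOn)
          (fun x _ => (hdiff x).hasDerivAt.neg)
          (fun x hx => by have := hle x hx.le; show Real.sqrt (E 0) ≤ -g x; linarith)
        set T := (|u 0| + C + 1)/Real.sqrt (E 0) with hTdef
        have hT0 : (0:ℝ) ≤ T := div_nonneg (by linarith [abs_nonneg (u 0), le_trans (abs_nonneg (u 0)) (hbdd 0)]) hsqpos.le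
        have h3 := hgrow T hT0
        have h4 : Real.sqrt (E 0) * (T - 0) = |u 0| + C + 1 := by
          rw [hTdef, sub_zero]; field_simp
        have h5 := hbdd T
        have h7 := le_abs_self (u 0)
        have h8 := (abs_le.1 h5).1
        linarith
      · have hsign : ∀ x, 0 ≤ x → 0 < g x := by
          intro x hx
          by_contra hge; push_neg at hge
          have hmem : (0:ℝ) ∈ Icc (g x) (g 0) := ⟨hge, hgpos.le⟩
          obtain ⟨z, hz, hz0⟩ := intermediate_value_Icc' hx hc.continuousOn hmem
          exact hgne z hz.1 hz0
        have hle : ∀ x, 0 ≤ x → Real.sqrt (E 0) ≤ g x := by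
          intro x hx
          have h2 := hg2 x hx
          nlinarith [hsign x hx]
        have hgrow := grow_of_hasDerivAt (f := u) (f' := g)
          (a := 0) (p := Real.sqrt (E 0)) (hcu.continuousOn)
          (fun x _ => (hdiff x).hasDerivAt)
          (fun x hx => hle x hx.le)
        set T := (|u 0| + C + 1)/Real.sqrt (E 0) with hTdef
        have hT0 : (0:ℝ) ≤ T := div_nonneg (by linarith [abs_nonneg (u 0), le_trans (abs_nonneg (u 0)) (hbdd 0)]) hsqpos.le
        have h3 := hgrow T hT0
        have h4 : Real.sqrt (E 0) * (T - 0) = |u 0| + C + 1 := by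
          rw [hTdef, sub_zero]; field_simp
        have h5 := hbdd T
        have h7 := neg_abs_le (u 0)
        have h8 := (abs_le.1 h5).2
        linarith
  -- Endgame
  have hE00 : (g 0)^2 - 2*μ*((u 0 - c)^2) = 0 := by
    have h := hEzero
    rw [hEdef] at h
    simpa [hqdef] using h
  have hJ0' : 2*(u 0 - c)*(g 0) + 2*γ*((u 0 - c)^2) ≤ 0 := by
    have h := hJ0
    rw [hQ1def] at h
    simpa [hqdef] using h
  have hfact : (g 0 - γ*(u 0 - c)) * (g 0 + γ*(u 0 - c)) = 0 := by
    linear_combination hE00 - (u 0 - c)^2 * hγ2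
  show g 0 = -γ * (u 0 - c)
  exact endgame hγpos hfact (by linarith)

/-- The unique bounded `C¹` function on `ℝ` solving `(1/2)u'' - (α+β)u = -1` on `(0,∞)` and
`(1/2)u'' - αu = -1` on `(-∞,0)` satisfies `u(0) = 1/√(α(α+β))`. -/
theorem arcsine_resolvent_at_zero (α β : ℝ) (hα : 0 < α) (hβ : 0 < β)
    (u : ℝ → ℝ)
    (hdiff : Differentiable ℝ u)
    (hderiv_cont : Continuous (deriv u))
    (hbdd : ∃ C, ∀ x, |u x| ≤ C)
    (hODEpos : ∀ x ∈ Ioi (0:ℝ), (1/2) * deriv (deriv u) x - (α + β) * u x = -1)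
    (hODEneg : ∀ x ∈ Iio (0:ℝ), (1/2) * deriv (deriv u) x - α * u x = -1) :
    u 0 = 1 / Real.sqrt (α * (α + β)) := by
  obtain ⟨C, hbdd⟩ := hbdd
  have hODE1 : ∀ x ∈ Ioi (0:ℝ), deriv (deriv u) x = 2*(α+β)*u x - 2 := by
    intro x hx; have := hODEpos x hx; linarith
  have hside1 := side (α+β) (by linarith) u hdiff hderiv_cont C hbdd hODE1
  -- reflection
  set v : ℝ → ℝ := fun x => u (-x) with hvdef
  have hvdiff : Differentiable ℝ v := hdiff.comp differentiable_neg
  have hvd : ∀ x, HasDerivAt v (-(deriv u (-x))) x := by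
    intro x
    have h1 := (hdiff (-x)).hasDerivAt
    have h2 : HasDerivAt (fun y : ℝ => -y) (-1) x := (hasDerivAt_id x).neg
    have h3 := h1.comp x h2
    exact h3.congr_deriv (by ring)
  have hvderiv : deriv v = fun x => -(deriv u (-x)) := funext fun x => (hvd x).deriv
  have hvcont : Continuous (deriv v) := by
    rw [hvderiv]; exact (hderiv_cont.comp continuous_neg).neg
  have hvbdd : ∀ x, |v x| ≤ C := fun x => hbdd (-x)
  have hODE2 : ∀ x ∈ Ioi (0:ℝ), deriv (deriv v) x = 2*α*v x - 2 := by
    intro x hx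
    have hx0 : (0:ℝ) < x := hx
    have hx' : -x ∈ Iio (0:ℝ) := by simp only [mem_Iio]; linarith
    have hODEn := hODEneg (-x) hx'
    have hveq : v x = u (-x) := rfl
    by_cases hd : DifferentiableAt ℝ (deriv u) (-x)
    · have h1 : HasDerivAt (deriv v) (deriv (deriv u) (-x)) x := by
        rw [hvderiv]
        have h2 := hd.hasDerivAt
        have h3 : HasDerivAt (fun y:ℝ => -y) (-1) x := (hasDerivAt_id x).neg
        have h4 := (h2.comp x h3).neg
        exact h4.congr_deriv (by ring)
      rw [h1.deriv, hveq]
      linarith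
    · have hnd : ¬ DifferentiableAt ℝ (deriv v) x := by
        intro hdv
        apply hd
        have heq : deriv u = fun y => -(deriv v (-y)) := by
          funext y; rw [hvderiv]; simp
        rw [heq]
        have h5 : DifferentiableAt ℝ (deriv v) (-(-x)) := by rw [neg_neg]; exact hdv
        exact (h5.comp (-x) differentiable_neg.differentiableAt).neg
      rw [deriv_zero_of_not_differentiableAt hnd]
      rw [deriv_zero_of_not_differentiableAt hd] at hODEn
      rw [hveq]
      linarith
  have hside2 := side α hα v hvdiff hvcont C hvbdd hODE2
  have hdv0 : deriv v 0 = -(deriv u 0) := by rw [hvderiv]; simp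
  have hv00 : v 0 = u 0 := by rw [hvdef]; simp
  rw [hdv0, hv00] at hside2
  -- algebra
  set γ := Real.sqrt (2*(α+β)) with hγdef
  set δ := Real.sqrt (2*α) with hδdef
  have hγ2 : γ^2 = 2*(α+β) := Real.sq_sqrt (by linarith)
  have hδ2 : δ^2 = 2*α := Real.sq_sqrt (by linarith)
  have hγpos : 0 < γ := Real.sqrt_pos.mpr (by linarith)
  have hδpos : 0 < δ := Real.sqrt_pos.mpr (by linarith)
  set c1 : ℝ := 1/(α+β) with hc1def
  set c2 : ℝ := 1/α with hc2def
  have hc1 : (α+β)*c1 = 1 := by rw [hc1def]; field_simp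
  have hc2 : α*c2 = 1 := by rw [hc2def]; field_simp
  have hA : γ*(u 0 - c1) + δ*(u 0 - c2) = 0 := by linarith [hside1, hside2]
  have hgc : γ^2*c1 = 2 := by rw [hγ2]; linear_combination 2*hc1
  have hdc : δ^2*c2 = 2 := by rw [hδ2]; linear_combination 2*hc2
  have h3 : (u 0 * (γ*δ) - 2)*(γ+δ) = 0 := by
    linear_combination γ*δ*hA + δ*hgc + γ*hdc
  have h4 : u 0 * (γ*δ) = 2 := by
    rcases mul_eq_zero.1 h3 with h | h
    · linarith
    · exfalso; have : (0:ℝ) < γ + δ := by linarith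
      linarith
  have hgd : (γ*δ)^2 = 4*(α*(α+β)) := by rw [mul_pow, hγ2, hδ2]; ring
  have h1 : α*(α+β) = (γ*δ/2)^2 := by rw [div_pow, hgd]; ring
  have hprod : Real.sqrt (α*(α+β)) = γ*δ/2 := by
    rw [h1, Real.sqrt_sq (by positivity)]
  rw [hprod]
  field_simp
  linarith [h4]
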